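/- Let σ : ℤ[t] → ℤ[q,q⁻¹] be the ring homomorphism sending t to q⁻¹·(1 + q + q²). For every word s ∈ List Bool, let (F₁, F₂, F₃) ∈ ℤ[t]³ be obtained from the seed (1, t² − t − 1, t − 1) by applying, for each letter of s, the move (x, y, z) ↦ (x, t·x·y − z, y) for the letter 0 and (x, y, z) ↦ (y, t·y·z − x, z) for the letter 1; and let (H₁, H₂, H₃) ∈ ℤ[q,q⁻¹]³ be obtained from the seed (q⁻¹, (q⁴+q³+q²+q+1)·q⁻³, (q²+1)·q⁻²) by applying, for each corresponding letter of s, the move (x, y, z) ↦ (x, [3]_q·x·y − z, y) for 0 and (x, y, z) ↦ (y, [3]_q·y·z − x, z) for 1. Then σ(Fᵢ) = q·Hᵢ for i = 1, 2, 3; that is, the t-deformation and the q-deformation of each Markov number satisfy f_w([3]_q/q) = q·h_w(q). -/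
import Mathlib


open LaurentPolynomial

/-- `q` as an element of the Laurent polynomial ring `ℤ[q,q⁻¹]`. -/
noncomputable abbrev q : LaurentPolynomial ℤ := T 1

/-- `q⁻¹` as an element of the Laurent polynomial ring `ℤ[q,q⁻¹]`. -/
noncomputable abbrev qinv : LaurentPolynomial ℤ := T (-1)

/-- The ring homomorphism `σ : ℤ[t] → ℤ[q,q⁻¹]` sending `t` to `q⁻¹·(1 + q + q²)`. -/
noncomputable def σ : Polynomial ℤ →+* LaurentPolynomial ℤ :=
  (Polynomial.aeval (qinv * (1 + q + q ^ 2)) :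
    Polynomial ℤ →ₐ[ℤ] LaurentPolynomial ℤ).toRingHom

/-- One castling move on triples of polynomials in `ℤ[t]`:
`false ↦ (x, t·x·y − z, y)`, `true ↦ (y, t·y·z − x, z)`. -/
noncomputable def tMove (b : Bool)
    (p : Polynomial ℤ × Polynomial ℤ × Polynomial ℤ) :
    Polynomial ℤ × Polynomial ℤ × Polynomial ℤ :=
  match b, p with
  | false, (x, y, z) => (x, Polynomial.X * x * y - z, y)
  | true, (x, y, z) => (y, Polynomial.X * y * z - x, z)

/-- One move on triples of Laurent polynomials:
`false ↦ (x, [3]_q·x·y − z, y)`, `true ↦ (y, [3]_q·y·z − x, z)`. -/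
noncomputable def qMove (b : Bool)
    (p : LaurentPolynomial ℤ × LaurentPolynomial ℤ × LaurentPolynomial ℤ) :
    LaurentPolynomial ℤ × LaurentPolynomial ℤ × LaurentPolynomial ℤ :=
  match b, p with
  | false, (x, y, z) => (x, (1 + q + q ^ 2) * x * y - z, y)
  | true, (x, y, z) => (y, (1 + q + q ^ 2) * y * z - x, z)

lemma hq_mul : q * qinv = 1 := by
  rw [← T_add]; norm_num

lemma σ_X : σ Polynomial.X = qinv * (1 + q + q ^ 2) := by
  simp [σ]

/-- For every word `s : List Bool`, letting `(F₁, F₂, F₃)` be obtained from the seed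
`(1, t² − t − 1, t − 1)` in `ℤ[t]³` by the castling moves along `s`, and `(H₁, H₂, H₃)`
from the seed `(q⁻¹, (q⁴+q³+q²+q+1)·q⁻³, (q²+1)·q⁻²)` in `ℤ[q,q⁻¹]³` by the
corresponding `q`-moves, one has `σ(Fᵢ) = q·Hᵢ` for `i = 1, 2, 3`:
the `t`- and `q`-deformations of Markov numbers satisfy `f_w([3]_q/q) = q·h_w(q)`. -/
theorem tDeformation_vs_qDeformation (s : List Bool) :
    (fun P : Polynomial ℤ × Polynomial ℤ × Polynomial ℤ =>
        (σ P.1, σ P.2.1, σ P.2.2))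
      (s.foldl (fun p b => tMove b p)
        (1, Polynomial.X ^ 2 - Polynomial.X - 1, Polynomial.X - 1)) =
    (fun P : LaurentPolynomial ℤ × LaurentPolynomial ℤ × LaurentPolynomial ℤ =>
        (q * P.1, q * P.2.1, q * P.2.2))
      (s.foldl (fun p b => qMove b p)
        (qinv, (q ^ 4 + q ^ 3 + q ^ 2 + q + 1) * qinv ^ 3, (q ^ 2 + 1) * qinv ^ 2)) := by
  have key : ∀ (s : List Bool) (P : Polynomial ℤ × Polynomial ℤ × Polynomial ℤ)
      (H : LaurentPolynomial ℤ × LaurentPolynomial ℤ × LaurentPolynomial ℤ),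
      σ P.1 = q * H.1 → σ P.2.1 = q * H.2.1 → σ P.2.2 = q * H.2.2 →
      (fun P : Polynomial ℤ × Polynomial ℤ × Polynomial ℤ =>
        (σ P.1, σ P.2.1, σ P.2.2)) (s.foldl (fun p b => tMove b p) P) =
      (fun P : LaurentPolynomial ℤ × LaurentPolynomial ℤ × LaurentPolynomial ℤ =>
        (q * P.1, q * P.2.1, q * P.2.2)) (s.foldl (fun p b => qMove b p) H) := by
    intro s
    induction s with
    | nil =>
      intro P H h1 h2 h3
      simp [h1, h2, h3]
    | cons b t ih =>
      intro P H h1 h2 h3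
      obtain ⟨x, y, z⟩ := P
      obtain ⟨X, Y, Z⟩ := H
      simp only at h1 h2 h3
      simp only [List.foldl_cons]
      cases b
      · apply ih
        · exact h1
        · show σ (Polynomial.X * x * y - z) = q * ((1 + q + q ^ 2) * X * Y - Z)
          simp only [map_sub, map_mul, σ_X, h1, h2, h3]
          linear_combination ((1 + q + q ^ 2) * X * Y * q) * hq_mul
        · exact h2
      · apply ih
        · exact h2
        · show σ (Polynomial.X * y * z - x) = q * ((1 + q + q ^ 2) * Y * Z - X)
          simp only [map_sub, map_mul, σ_X, h1, h2, h3]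
          linear_combination ((1 + q + q ^ 2) * Y * Z * q) * hq_mul
        · exact h3
  apply key
  · show σ 1 = q * qinv
    rw [map_one, hq_mul]
  · show σ (Polynomial.X ^ 2 - Polynomial.X - 1) =
      q * ((q ^ 4 + q ^ 3 + q ^ 2 + q + 1) * qinv ^ 3)
    simp only [map_sub, map_pow, map_one, σ_X]
    linear_combination (qinv + 2 * q * qinv + q ^ 2 * qinv + 1 -
      (q ^ 4 + q ^ 3 + q ^ 2 + q + 1) * qinv ^ 2) * hq_mul
  · show σ (Polynomial.X - 1) = q * ((q ^ 2 + 1) * qinv ^ 2)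
    simp only [map_sub, map_one, σ_X]
    linear_combination (1 - q ^ 2 * qinv - qinv) * hq_mul
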